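/- Suppose x_0 > x_1 > ... > x_n are real numbers and {p_k}_{k=0}^n satisfies the recurrence p_{k+1}(x) + p_{k-1}(x) = (a_k x + b_k) p_k(x) (1 ≤ k ≤ n−1), p_0 = 1, p_1 = a_0 x + b_0, with a_k > 0, together with the reflection condition a_k = a_{n−k}, b_k = b_{n−k} for 1 ≤ k ≤ n−1. If additionally n = 2m−1 is odd and p_m(x_j) = (−1)^j p_{m−1}(x_j) for all 0 ≤ j ≤ n, then the full alternation condition holds: p_{n−k}(x_j) = (−1)^j p_k(x_j) for all 0 ≤ j, k ≤ n. -/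
import Mathlib


open Polynomial Finset

theorem alternation_odd (n m : ℕ) (hm : 1 ≤ m) (hn : n = 2*m - 1)
    (x : ℕ → ℝ) (hx : ∀ j, j < n → x (j+1) < x j)
    (a b : ℕ → ℝ) (p : ℕ → Polynomial ℝ)
    (hp0 : p 0 = 1)
    (hp1 : p 1 = C (a 0) * X + C (b 0))
    (hrec : ∀ k, 1 ≤ k → k ≤ n - 1 →
      p (k+1) + p (k-1) = (C (a k) * X + C (b k)) * p k)
    (hpos : ∀ k, k ≤ n - 1 → 0 < a k)
    (hrefl : ∀ k, 1 ≤ k → k ≤ n - 1 → a k = a (n - k) ∧ b k = b (n - k))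
    (hcen : ∀ j, j ≤ n → (p m).eval (x j) = (-1)^j * (p (m-1)).eval (x j)) :
    ∀ j k, j ≤ n → k ≤ n → (p (n - k)).eval (x j) = (-1)^j * (p k).eval (x j) := by
  have hε : ∀ j : ℕ, ((-1:ℝ))^j * (-1)^j = 1 := by
    intro j
    rw [← pow_add]
    exact Even.neg_one_pow ⟨j, rfl⟩
  -- downward step lemma
  have step : ∀ k, 1 ≤ k → k ≤ m - 1 →
      (∀ j, j ≤ n → (p (n - k)).eval (x j) = (-1)^j * (p k).eval (x j)) →
      (∀ j, j ≤ n → (p (n - (k+1))).eval (x j) = (-1)^j * (p (k+1)).eval (x j)) →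
      (∀ j, j ≤ n → (p (n - (k-1))).eval (x j) = (-1)^j * (p (k-1)).eval (x j)) := by
    intro k hk1 hkm q1 q2 j hj
    have hk2 : k ≤ n - 1 := by omega
    have hnk1 : 1 ≤ n - k := by omega
    have hnk2 : n - k ≤ n - 1 := by omega
    have e1 := congrArg (eval (x j)) (hrec k hk1 hk2)
    have e2 := congrArg (eval (x j)) (hrec (n - k) hnk1 hnk2)
    simp only [eval_add, eval_mul, eval_C, eval_X] at e1 e2
    obtain ⟨ha, hb⟩ := hrefl k hk1 hk2
    rw [← ha, ← hb] at e2
    have i1 : n - k + 1 = n - (k - 1) := by omega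
    have i2 : n - k - 1 = n - (k + 1) := by omega
    rw [i1, i2] at e2
    have q1' := q1 j hj
    have q2' := q2 j hj
    linear_combination e2 + (a k * x j + b k) * q1' - q2' - (-1:ℝ)^j * e1
  -- central base cases
  have base1 : ∀ j, j ≤ n → (p (n - (m-1))).eval (x j) = (-1)^j * (p (m-1)).eval (x j) := by
    intro j hj
    have : n - (m - 1) = m := by omega
    rw [this]
    exact hcen j hj
  have base2 : ∀ j, j ≤ n → (p (n - m)).eval (x j) = (-1)^j * (p m).eval (x j) := by
    intro j hj
    have h1 : n - m = m - 1 := by omega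
    rw [h1, hcen j hj, ← mul_assoc, hε, one_mul]
  -- downward induction: Q(m-1-i) and Q(m-i) hold for all i ≤ m-1
  have key : ∀ i, i ≤ m - 1 →
      (∀ j, j ≤ n → (p (n - (m-1-i))).eval (x j) = (-1)^j * (p (m-1-i)).eval (x j)) ∧
      (∀ j, j ≤ n → (p (n - (m-i))).eval (x j) = (-1)^j * (p (m-i)).eval (x j)) := by
    intro i
    induction i with
    | zero =>
      intro _
      simp only [Nat.sub_zero]
      exact ⟨base1, base2⟩
    | succ i ih =>
      intro hi
      obtain ⟨ih1, ih2⟩ := ih (by omega)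
      have hk1 : 1 ≤ m - 1 - i := by omega
      have hk2 : m - 1 - i ≤ m - 1 := by omega
      have e1 : m - 1 - i + 1 = m - i := by omega
      have e2 : m - 1 - i - 1 = m - 1 - (i + 1) := by omega
      have e3 : m - (i + 1) = m - 1 - i := by omega
      have := step (m - 1 - i) hk1 hk2 ih1 (by rw [e1]; exact ih2)
      rw [e2] at this
      constructor
      · exact this
      · rw [e3]; exact ih1
  -- conclude
  intro j k hj hk
  by_cases hkm : k ≤ m - 1
  · have h := (key (m - 1 - k) (by omega)).1
    have : m - 1 - (m - 1 - k) = k := by omega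
    rw [this] at h
    exact h j hj
  · -- k ≥ m, so n - k ≤ m - 1
    have hk' : n - k ≤ m - 1 := by omega
    have h := (key (m - 1 - (n - k)) (by omega)).1
    have e : m - 1 - (m - 1 - (n - k)) = n - k := by omega
    rw [e] at h
    have h' := h j hj
    have e2 : n - (n - k) = k := by omega
    rw [e2] at h'
    rw [h', ← mul_assoc, hε, one_mul]
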